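/- Let X be a real Banach space and F : B(0, 1) → X an isometry. Let z₀ ∈ X with ‖z₀‖ = 1 and 0 ≤ λ < 1, and suppose there exists ρ > 0 such that B(λz₀, ρ) ⊂ B(0, 1) and F(x) = x for all x ∈ B(λz₀, ρ). Then for every μ with 2λ − 1 < μ < 1 there exists ρ' > 0 such that B(μz₀, ρ') ⊂ B(0, 1) and F(x) = x for all x ∈ B(μz₀, ρ'). -/

import Mathlib

/-- Three-point lemma: a "convex" function equal at three points is constant between. -/
lemma three_point {G : ℝ → ℝ}
    (hG : ∀ p q θ : ℝ, 0 ≤ θ → θ ≤ 1 → G (θ*p + (1-θ)*q) ≤ θ * G p + (1-θ) * G q)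
    {p q s A : ℝ} (hpq : p < q) (hqs : q < s)
    (hGp : G p = A) (hGq : G q = A) (hGs : G s = A) :
    ∀ x, p ≤ x → x ≤ s → G x = A := by
  intro x hx1 hx2
  have hsp : (0:ℝ) < s - p := by linarith
  -- upper bound
  have hub : G x ≤ A := by
    have hθ0 : 0 ≤ (s - x)/(s - p) := by apply div_nonneg <;> linarith
    have hθ1 : (s - x)/(s - p) ≤ 1 := by
      rw [div_le_one hsp]; linarith
    have hcomb : ((s - x)/(s - p))*p + (1-(s - x)/(s - p))*s = x := by
      field_simp
      ring
    have := hG p s ((s - x)/(s - p)) hθ0 hθ1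
    rw [hcomb, hGp, hGs] at this
    calc G x ≤ ((s - x)/(s - p)) * A + (1-(s - x)/(s - p)) * A := this
      _ = A := by ring
  -- lower bound
  have hlb : A ≤ G x := by
    rcases le_or_gt x q with hxq | hxq
    · have hsx : (0:ℝ) < s - x := by linarith
      set θ := (s - q)/(s - x) with hθdef
      have hθ0 : 0 < θ := by apply div_pos <;> linarith
      have hθ1 : θ ≤ 1 := by rw [div_le_one hsx]; linarith
      have hcomb : θ*x + (1-θ)*s = q := by
        rw [hθdef]
        field_simp [hθdef]
        ring
      have h := hG x s θ hθ0.le hθ1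
      rw [hcomb, hGq, hGs] at h
      nlinarith
    · have hxp : (0:ℝ) < x - p := by linarith
      set θ := (q - p)/(x - p) with hθdef
      have hθ0 : 0 < θ := by
        apply div_pos <;> linarith
      have hθ1 : θ ≤ 1 := by rw [div_le_one hxp]; linarith
      have hcomb : θ*x + (1-θ)*p = q := by
        rw [hθdef]
        field_simp [hθdef]
        ring
      have h := hG x p θ hθ0.le hθ1
      rw [hcomb, hGq, hGp] at h
      nlinarith
  linarith

/-- Convex + periodic on a long-enough interval ⇒ constant there. -/
lemma convex_periodic_const {G : ℝ → ℝ}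
    (hG : ∀ p q θ : ℝ, 0 ≤ θ → θ ≤ 1 → G (θ*p + (1-θ)*q) ≤ θ * G p + (1-θ) * G q)
    {a b δ : ℝ} (ha : 0 ≤ a) (hb : 0 ≤ b) (hδ : 0 < δ) (hab : δ ≤ a + b)
    (hper : ∀ ξ, -a ≤ ξ → ξ ≤ b → G ξ = G (ξ + δ)) :
    ∀ ξ, -a ≤ ξ → ξ ≤ b + δ → G ξ = G (-a) := by
  have hd1 : -a + δ ≤ b := by linarith
  have h1 : G (-a + δ) = G (-a) := by
    have h := hper (-a) le_rfl (by linarith)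
    rw [← h]
  have h2 : G (-a + 2*δ) = G (-a) := by
    have h := hper (-a + δ) (by linarith) hd1
    rw [show -a + 2*δ = -a + δ + δ by ring, ← h, h1]
  have base : ∀ x, -a ≤ x → x ≤ -a + 2*δ → G x = G (-a) :=
    three_point hG (by linarith : -a < -a + δ) (by linarith : -a + δ < -a + 2*δ)
      rfl h1 h2
  have main : ∀ k : ℕ, ∀ ξ, -a ≤ ξ → ξ ≤ b + δ → ξ ≤ -a + (k + 2) * δ → G ξ = G (-a) := by
    intro k
    induction k with
    | zero =>
      intro ξ h₁ h₂ h₃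
      exact base ξ h₁ (by push_cast at h₃; linarith)
    | succ n ih =>
      intro ξ h₁ h₂ h₃
      by_cases hc : ξ ≤ -a + (n + 2) * δ
      · exact ih ξ h₁ h₂ hc
      · push_neg at hc
        have hn2 : -a + (n + 2 : ℝ) * δ ≥ -a + 2*δ := by
          have h2n : (0:ℝ) ≤ (n:ℝ) := Nat.cast_nonneg n
          nlinarith
        have hp1 : -a ≤ ξ - δ := by linarith
        have hp2 : ξ - δ ≤ b := by linarith
        have hper' := hper (ξ - δ) hp1 hp2
        rw [sub_add_cancel] at hper'
        rw [← hper']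
        apply ih (ξ - δ) hp1 (by linarith)
        push_cast at h₃ ⊢
        linarith
  intro ξ h₁ h₂
  obtain ⟨k, hk⟩ := exists_nat_ge ((a + b)/δ)
  apply main k ξ h₁ h₂
  have : a + b ≤ k * δ := by
    rw [div_le_iff₀ hδ] at hk
    linarith
  linarith

/-- Key geometric lemma: distances to a ball of radius `r` determine any point of
norm `< 2r`. -/
lemma ball_dist_det {X : Type*} [NormedAddCommGroup X] [NormedSpace ℝ X]
    {c d : X} {r : ℝ} (hr : 0 < r) (hc : ‖c‖ < 2*r)
    (h : ∀ v : X, ‖v‖ ≤ r → ‖c - v‖ = ‖d - v‖) : d = c := by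
  by_cases hcr : ‖c‖ ≤ r
  · have h0 := h c hcr
    rw [sub_self, norm_zero] at h0
    exact sub_eq_zero.mp (norm_eq_zero.mp h0.symm)
  push_neg at hcr
  by_contra hdc
  set t : ℝ := ‖c‖ with htdef
  have ht0 : 0 < t := lt_trans hr hcr
  have htr : 0 < t - r := by linarith
  have htr2 : t - r < r := by linarith
  have hδ0 : (0:ℝ) < ‖d - c‖ := norm_pos_iff.mpr (sub_ne_zero.mpr hdc)
  set δ : ℝ := ‖d - c‖ with hδdef
  set u : X := δ⁻¹ • (d - c) with hudef
  have hu : ‖u‖ = 1 := norm_smul_inv_norm (sub_ne_zero.mpr hdc)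
  have hdu : d = c + δ • u := by
    rw [hudef, smul_inv_smul₀ (ne_of_gt hδ0)]
    abel
  set G : ℝ → ℝ := fun ξ => ‖c + ξ • u‖ with hGdef
  have hGeq : ∀ ξ : ℝ, G ξ = ‖c + ξ • u‖ := fun _ => rfl
  have hGconv : ∀ p q θ : ℝ, 0 ≤ θ → θ ≤ 1 → G (θ*p + (1-θ)*q) ≤ θ * G p + (1-θ) * G q := by
    intro p q θ h0 h1
    have hid : c + (θ*p + (1-θ)*q) • u = θ • (c + p • u) + (1-θ) • (c + q • u) := by module
    rw [hGeq, hGeq, hGeq, hid]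
    calc ‖θ • (c + p • u) + (1-θ) • (c + q • u)‖
        ≤ ‖θ • (c + p • u)‖ + ‖(1-θ) • (c + q • u)‖ := norm_add_le _ _
      _ = θ * ‖c + p • u‖ + (1-θ) * ‖c + q • u‖ := by
          rw [norm_smul, norm_smul, Real.norm_eq_abs, Real.norm_eq_abs,
            abs_of_nonneg h0, abs_of_nonneg (by linarith : (0:ℝ) ≤ 1 - θ)]
  have hG0 : G 0 = t := by rw [hGeq]; simp [← htdef]
  -- Step A : δ ≤ 2 (t - r)
  have hA : δ ≤ 2*(t - r) := by
    have hwn : ‖(r/t) • c‖ = r := by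
      rw [norm_smul, Real.norm_eq_abs, abs_of_nonneg (by positivity : (0:ℝ) ≤ r/t), ← htdef]
      field_simp
    have h1 := h ((r/t) • c) (le_of_eq hwn)
    have hcw : ‖c - (r/t) • c‖ = t - r := by
      have hid : c - (r/t) • c = (1 - r/t) • c := by module
      rw [hid, norm_smul, Real.norm_eq_abs,
        abs_of_nonneg (by rw [sub_nonneg, div_le_one ht0]; linarith : (0:ℝ) ≤ 1 - r/t), ← htdef]
      field_simp
    have htri : δ ≤ ‖d - (r/t) • c‖ + ‖(r/t) • c - c‖ := by
      rw [hδdef]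
      exact norm_sub_le_norm_sub_add_norm_sub d ((r/t) • c) c
    rw [← h1, norm_sub_rev ((r/t) • c) c, hcw] at htri
    linarith
  -- base flat interval
  have hper0 : ∀ ξ, -r ≤ ξ → ξ ≤ r → G ξ = G (ξ + δ) := by
    intro ξ h₁ h₂
    have hvn : ‖(-ξ) • u‖ ≤ r := by
      rw [norm_smul, Real.norm_eq_abs, hu, mul_one, abs_neg, abs_le]
      exact ⟨h₁, h₂⟩
    have heq := h ((-ξ) • u) hvn
    have hidc : c - (-ξ) • u = c + ξ • u := by module
    have hidd : d - (-ξ) • u = c + (ξ + δ) • u := by rw [hdu]; module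
    rw [hidc, hidd] at heq
    rw [hGeq, hGeq]
    exact heq
  have hbase : ∀ ξ, -r ≤ ξ → ξ ≤ r + δ → G ξ = t := by
    have hcpl := convex_periodic_const hGconv hr.le hr.le hδ0 (by linarith : δ ≤ r + r) hper0
    have hval : G (-r) = t := by
      rw [← hcpl 0 (by linarith) (by linarith)]
      exact hG0
    intro ξ h₁ h₂
    rw [hcpl ξ h₁ h₂, hval]
  -- iteration step
  have hstep : ∀ P : ℝ, r ≤ P → (∀ ξ, -P ≤ ξ → ξ ≤ P + δ → G ξ = t) →
      (∀ ξ, -(r*(P+δ)/(t-r)) ≤ ξ → ξ ≤ r*(P+δ)/(t-r) + δ → G ξ = t) := by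
    intro P hP hflat
    set H : ℝ → ℝ := fun ζ => ‖((t-r)/t) • c + ζ • u‖ with hHdef
    have hHeq : ∀ ζ : ℝ, H ζ = ‖((t-r)/t) • c + ζ • u‖ := fun _ => rfl
    have hHconv : ∀ p q θ : ℝ, 0 ≤ θ → θ ≤ 1 → H (θ*p + (1-θ)*q) ≤ θ * H p + (1-θ) * H q := by
      intro p q θ h0 h1
      have hid : ((t-r)/t) • c + (θ*p + (1-θ)*q) • u
          = θ • (((t-r)/t) • c + p • u) + (1-θ) • (((t-r)/t) • c + q • u) := by module
      rw [hHeq, hHeq, hHeq, hid]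
      calc ‖θ • (((t-r)/t) • c + p • u) + (1-θ) • (((t-r)/t) • c + q • u)‖
          ≤ ‖θ • (((t-r)/t) • c + p • u)‖ + ‖(1-θ) • (((t-r)/t) • c + q • u)‖ := norm_add_le _ _
        _ = θ * ‖((t-r)/t) • c + p • u‖ + (1-θ) * ‖((t-r)/t) • c + q • u‖ := by
            rw [norm_smul, norm_smul, Real.norm_eq_abs, Real.norm_eq_abs,
              abs_of_nonneg h0, abs_of_nonneg (by linarith : (0:ℝ) ≤ 1 - θ)]
    have hHrel : ∀ ξ : ℝ, H (((t-r)/t)*ξ) = ((t-r)/t) * G ξ := by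
      intro ξ
      have hid : ((t-r)/t) • c + (((t-r)/t)*ξ) • u = ((t-r)/t) • (c + ξ • u) := by module
      rw [hHeq, hGeq, hid, norm_smul, Real.norm_eq_abs,
        abs_of_nonneg (by positivity : (0:ℝ) ≤ (t-r)/t)]
    have hH0 : H 0 = t - r := by
      rw [hHeq]
      simp only [zero_smul, add_zero, norm_smul, Real.norm_eq_abs,
        abs_of_nonneg (by positivity : (0:ℝ) ≤ (t-r)/t), ← htdef]
      field_simp
    have hrt0 : (0:ℝ) < t/r := div_pos ht0 hr
    have hHper : ∀ ζ, -(r*(P+δ)/t) ≤ ζ → ζ ≤ r*P/t → H ζ = H (ζ + δ) := by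
      intro ζ h₁ h₂
      set ξ₀ : ℝ := -(t/r)*ζ with hξ₀def
      have hξ₀1 : -P ≤ ξ₀ := by
        have h2' := mul_le_mul_of_nonneg_left h₂ hrt0.le
        have e1 : (t/r)*(r*P/t) = P := by field_simp
        rw [e1] at h2'
        rw [hξ₀def]
        linarith
      have hξ₀2 : ξ₀ ≤ P + δ := by
        have h1' := mul_le_mul_of_nonneg_left h₁ hrt0.le
        have e2 : (t/r)*(-(r*(P+δ)/t)) = -(P+δ) := by field_simp
        rw [e2] at h1'
        rw [hξ₀def]
        linarith
      have hGξ₀ : ‖c + ξ₀ • u‖ = t := by rw [← hGeq]; exact hflat ξ₀ hξ₀1 hξ₀2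
      set w : X := (r/t) • (c + ξ₀ • u) with hwdef
      have hwn : ‖w‖ ≤ r := by
        rw [hwdef, norm_smul, Real.norm_eq_abs, abs_of_nonneg (by positivity : (0:ℝ) ≤ r/t),
          hGξ₀, div_mul_cancel₀ _ (ne_of_gt ht0)]
      have heq := h w hwn
      have hrξ : (r/t) * ξ₀ = -ζ := by
        rw [hξ₀def]
        field_simp
      have hco : (1:ℝ) - r/t = (t-r)/t := by field_simp
      have hidc : c - w = ((t-r)/t) • c + ζ • u := by
        rw [hwdef]
        have step1 : c - (r/t) • (c + ξ₀ • u) = (1 - r/t) • c + (-((r/t) * ξ₀)) • u := by module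
        rw [step1, hco, hrξ, neg_neg]
      have hidd : d - w = ((t-r)/t) • c + (ζ + δ) • u := by
        rw [hdu, hwdef]
        have step1 : c + δ • u - (r/t) • (c + ξ₀ • u)
            = (1 - r/t) • c + (δ - (r/t) * ξ₀) • u := by module
        have step2 : δ - (r/t) * ξ₀ = ζ + δ := by rw [hrξ]; ring
        rw [step1, hco, step2]
      rw [hidc, hidd] at heq
      rw [hHeq, hHeq]
      exact heq
    have hacp : (0:ℝ) ≤ r*(P+δ)/t := div_nonneg (mul_nonneg hr.le (by linarith)) ht0.le
    have hbcp : (0:ℝ) ≤ r*P/t := div_nonneg (mul_nonneg hr.le (le_trans hr.le hP)) ht0.le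
    have habcp : δ ≤ r*(P+δ)/t + r*P/t := by
      rw [← add_div, le_div_iff₀ ht0]
      nlinarith [hA, htr2, hP, hδ0, hr]
    have hHflat := convex_periodic_const hHconv hacp hbcp hδ0 habcp hHper
    have hHval : H (-(r*(P+δ)/t)) = t - r := by
      rw [← hHflat 0 (by linarith) (by linarith)]
      exact hH0
    intro ξ hξ1 hξ2
    have hfrac0 : (0:ℝ) < (t-r)/t := div_pos htr ht0
    have hζ1 : -(r*(P+δ)/t) ≤ ((t-r)/t)*ξ := by
      have h' := mul_le_mul_of_nonneg_left hξ1 hfrac0.le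
      have e : ((t-r)/t) * (-(r*(P+δ)/(t-r))) = -(r*(P+δ)/t) := by
        field_simp
      rw [e] at h'
      exact h'
    have hζ2 : ((t-r)/t)*ξ ≤ r*P/t + δ := by
      have h' := mul_le_mul_of_nonneg_left hξ2 hfrac0.le
      have e : ((t-r)/t) * (r*(P+δ)/(t-r) + δ) = r*P/t + δ := by
        field_simp
        ring
      rw [e] at h'
      exact h'
    have hHζ : H (((t-r)/t)*ξ) = t - r := by
      rw [hHflat (((t-r)/t)*ξ) hζ1 hζ2, hHval]
    have hrel := hHrel ξ
    rw [hHζ] at hrel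
    have e2 : ((t-r)/t) * G ξ = ((t-r)/t) * t := by
      rw [← hrel]
      field_simp
    exact mul_left_cancel₀ (ne_of_gt hfrac0) e2
  -- iterate
  have hs₀0 : (0:ℝ) < (2*r - t)*r/(t-r) := div_pos (mul_pos (by linarith) hr) htr
  set s₀ : ℝ := (2*r - t)*r/(t-r) with hs₀def
  have hs₀mul : s₀*(t-r) = (2*r-t)*r := by
    rw [hs₀def]
    field_simp
  have main : ∀ k : ℕ, ∃ P : ℝ, r ≤ P ∧ r + k * s₀ ≤ P ∧
      ∀ ξ, -P ≤ ξ → ξ ≤ P + δ → G ξ = t := by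
    intro k
    induction k with
    | zero => exact ⟨r, le_rfl, by simp, hbase⟩
    | succ n ih =>
      obtain ⟨P, hP1, hP2, hP3⟩ := ih
      refine ⟨r*(P+δ)/(t-r), ?_, ?_, hstep P hP1 hP3⟩
      · rw [le_div_iff₀ htr]
        nlinarith
      · rw [le_div_iff₀ htr]
        have hns₀ : (n:ℝ)*s₀ ≤ P - r := by linarith
        have hcast : ((n+1 : ℕ):ℝ) = (n:ℝ) + 1 := by push_cast; ring
        rw [hcast]
        have key : ((n:ℝ)*s₀)*(t-r) ≤ ((n:ℝ)*s₀)*r :=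
          mul_le_mul_of_nonneg_left htr2.le
            (mul_nonneg (Nat.cast_nonneg n) hs₀0.le)
        have key2 : ((n:ℝ)*s₀)*r ≤ (P - r)*r :=
          mul_le_mul_of_nonneg_right hns₀ hr.le
        nlinarith [hs₀mul, hδ0, hr, hP1]
  obtain ⟨k, hk⟩ := exists_nat_ge (2*t/s₀)
  obtain ⟨P, hP1, hP2, hP3⟩ := main k
  have hk' : 2*t ≤ k*s₀ := by
    rw [div_le_iff₀ hs₀0] at hk
    linarith
  have hPM : 2*t < P := by linarith
  have hGP : ‖c + P • u‖ = t := by rw [← hGeq]; exact hP3 P (by linarith) (by linarith)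
  have htri : ‖P • u‖ ≤ ‖c + P • u‖ + ‖c‖ := by
    calc ‖P • u‖ = ‖(c + P • u) - c‖ := by congr 1; abel
      _ ≤ ‖c + P • u‖ + ‖c‖ := norm_sub_le _ _
  rw [norm_smul, Real.norm_eq_abs, hu, mul_one,
    abs_of_pos (by linarith : (0:ℝ) < P), hGP, ← htdef] at htri
  linarith

/-- If an isometry of the closed unit ball fixes a ball `B(q,r) ⊆ B(0,1)` pointwise,
it fixes every point of the unit ball at distance `< 2r` from `q`. -/
lemma fix_extend {X : Type*} [NormedAddCommGroup X] [NormedSpace ℝ X]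
    (F : X → X)
    (hF : ∀ x₁ ∈ Metric.closedBall (0 : X) 1, ∀ x₂ ∈ Metric.closedBall (0 : X) 1,
      ‖F x₁ - F x₂‖ = ‖x₁ - x₂‖)
    (q : X) (r : ℝ) (hr : 0 < r)
    (hq : Metric.closedBall q r ⊆ Metric.closedBall (0 : X) 1)
    (hfix : ∀ w ∈ Metric.closedBall q r, F w = w)
    (x : X) (hx : x ∈ Metric.closedBall (0 : X) 1) (hxq : ‖x - q‖ < 2*r) :
    F x = x := by
  have key : F x - q = x - q := by
    apply ball_dist_det hr hxq
    intro v hv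
    have hmem : q + v ∈ Metric.closedBall q r := by
      rw [Metric.mem_closedBall, dist_eq_norm]
      simpa using hv
    have hFp : F (q + v) = q + v := hfix _ hmem
    have hiso := hF x hx (q + v) (hq hmem)
    rw [hFp] at hiso
    have e1 : F x - (q + v) = F x - q - v := by abel
    have e2 : x - (q + v) = x - q - v := by abel
    rw [e1, e2] at hiso
    exact hiso.symm
  have := congrArg (· + q) key
  simpa using this

/-- Propagation step along a radius: if `F` fixes a small ball around `λ • z₀`
pointwise, it fixes a small ball around `μ • z₀` for every `μ ∈ (2λ - 1, 1)`. -/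
theorem isometry_unitBall_fix_propagates
    {X : Type*} [NormedAddCommGroup X] [NormedSpace ℝ X] [CompleteSpace X]
    (F : X → X)
    (hF : ∀ x₁ ∈ Metric.closedBall (0 : X) 1, ∀ x₂ ∈ Metric.closedBall (0 : X) 1,
      ‖F x₁ - F x₂‖ = ‖x₁ - x₂‖)
    (z₀ : X) (hz₀ : ‖z₀‖ = 1) (lam : ℝ) (hlam0 : 0 ≤ lam) (hlam1 : lam < 1)
    (ρ : ℝ) (hρ : 0 < ρ)
    (hsub : Metric.closedBall (lam • z₀) ρ ⊆ Metric.closedBall (0 : X) 1)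
    (hfix : ∀ x ∈ Metric.closedBall (lam • z₀) ρ, F x = x) :
    ∀ μ : ℝ, 2 * lam - 1 < μ → μ < 1 → ∃ ρ' > 0,
      Metric.closedBall (μ • z₀) ρ' ⊆ Metric.closedBall (0 : X) 1 ∧
      ∀ x ∈ Metric.closedBall (μ • z₀) ρ', F x = x := by
  intro μ hμ1 hμ2
  have hμneg : -1 < μ := by linarith
  have hμabs : |μ| < 1 := abs_lt.mpr ⟨hμneg, hμ2⟩
  set m : ℝ := max lam |μ| with hmdef
  have hm1 : m < 1 := max_lt hlam1 hμabs
  have hm0 : 0 ≤ m := le_trans hlam0 (le_max_left _ _)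
  set s : ℝ := min ρ (1 - m) with hsdef
  have hs0 : 0 < s := lt_min hρ (by linarith)
  have hsρ : s ≤ ρ := min_le_left _ _
  have hsm : s ≤ 1 - m := min_le_right _ _
  -- choose number of steps
  obtain ⟨K₀, hK₀⟩ := exists_nat_ge (2*|μ - lam|/s)
  set K : ℕ := K₀ + 1 with hKdef
  have hKpos : 0 < K := Nat.succ_pos _
  have hKR : (0:ℝ) < K := by exact_mod_cast hKpos
  have hKne : (K:ℝ) ≠ 0 := ne_of_gt hKR
  have hKs : 2*|μ - lam| ≤ K * s := by
    rw [div_le_iff₀ hs0] at hK₀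
    have : (K₀:ℝ) ≤ (K:ℝ) := by exact_mod_cast Nat.le_succ _
    nlinarith [hs0]
  set Δ : ℝ := (μ - lam)/K with hΔdef
  have hΔabs : |Δ| ≤ s/2 := by
    rw [hΔdef, abs_div, abs_of_pos hKR, div_le_div_iff₀ hKR (by norm_num : (0:ℝ) < 2)]
    linarith
  set ν : ℕ → ℝ := fun j => lam + j * Δ with hνdef
  have hν0 : ν 0 = lam := by simp [hνdef]
  have hνK : ν K = μ := by
    rw [hνdef]
    simp only
    rw [hΔdef]
    field_simp
    ring
  have hνstep : ∀ j : ℕ, ν (j+1) - ν j = Δ := by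
    intro j
    rw [hνdef]
    simp only
    push_cast
    ring
  -- bound on |ν j|
  have hνm : ∀ j : ℕ, j ≤ K → |ν j| ≤ m := by
    intro j hj
    have hθ0 : (0:ℝ) ≤ (j:ℝ)/K := by positivity
    have hθ1 : (j:ℝ)/K ≤ 1 := by
      rw [div_le_one hKR]
      exact_mod_cast hj
    have hid : ν j = (1 - (j:ℝ)/K)*lam + ((j:ℝ)/K)*μ := by
      rw [hνdef]
      simp only
      rw [hΔdef]
      field_simp
      ring
    rw [hid]
    calc |(1 - (j:ℝ)/K)*lam + ((j:ℝ)/K)*μ|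
        ≤ |(1 - (j:ℝ)/K)*lam| + |((j:ℝ)/K)*μ| := abs_add_le _ _
      _ = (1 - (j:ℝ)/K)*lam + ((j:ℝ)/K)*|μ| := by
          rw [abs_mul, abs_mul, abs_of_nonneg (by linarith : (0:ℝ) ≤ 1 - (j:ℝ)/K),
            abs_of_nonneg hlam0, abs_of_nonneg hθ0]
      _ ≤ (1 - (j:ℝ)/K)*m + ((j:ℝ)/K)*m := by
          have h1 : lam ≤ m := le_max_left _ _
          have h2 : |μ| ≤ m := le_max_right _ _
          have := mul_le_mul_of_nonneg_left h1 (by linarith : (0:ℝ) ≤ 1 - (j:ℝ)/K)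
          have := mul_le_mul_of_nonneg_left h2 hθ0
          linarith
      _ = m := by ring
  -- balls along the path are inside the unit ball
  have hball : ∀ j : ℕ, j ≤ K → Metric.closedBall ((ν j) • z₀) s ⊆ Metric.closedBall (0:X) 1 := by
    intro j hj x hx
    rw [Metric.mem_closedBall, dist_eq_norm] at hx ⊢
    have h1 : ‖x‖ ≤ ‖x - (ν j) • z₀‖ + ‖(ν j) • z₀‖ := by
      calc ‖x‖ = ‖(x - (ν j) • z₀) + (ν j) • z₀‖ := by congr 1; abel
        _ ≤ _ := norm_add_le _ _
    have h2 : ‖(ν j) • z₀‖ = |ν j| := by rw [norm_smul, Real.norm_eq_abs, hz₀, mul_one]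
    have h3 := hνm j hj
    have h4 : ‖x‖ ≤ 1 := by
      rw [h2] at h1
      linarith [h1, hx, h3, hsm]
    rw [sub_zero]
    exact h4
  -- the main induction along the chain
  have main : ∀ j : ℕ, j ≤ K → ∀ x ∈ Metric.closedBall ((ν j) • z₀) s, F x = x := by
    intro j
    induction j with
    | zero =>
      intro _ x hx
      apply hfix
      rw [Metric.mem_closedBall] at hx ⊢
      rw [hν0] at hx
      linarith
    | succ n ih =>
      intro hn1 x hx
      have hn : n ≤ K := Nat.le_of_succ_le hn1
      apply fix_extend F hF ((ν n) • z₀) s hs0 (hball n hn) (ih hn) x (hball (n+1) hn1 hx)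
      rw [Metric.mem_closedBall, dist_eq_norm] at hx
      have h1 : ‖x - (ν n) • z₀‖ ≤ ‖x - (ν (n+1)) • z₀‖ + ‖(ν (n+1)) • z₀ - (ν n) • z₀‖ := by
        calc ‖x - (ν n) • z₀‖ = ‖(x - (ν (n+1)) • z₀) + ((ν (n+1)) • z₀ - (ν n) • z₀)‖ := by
              congr 1; abel
          _ ≤ _ := norm_add_le _ _
      have h2 : ‖(ν (n+1)) • z₀ - (ν n) • z₀‖ = |Δ| := by
        rw [← sub_smul, norm_smul, Real.norm_eq_abs, hz₀, mul_one, hνstep n]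
      rw [h2] at h1
      have := hΔabs
      linarith
  have hsubK : Metric.closedBall (μ • z₀) s ⊆ Metric.closedBall (0:X) 1 := by
    rw [← hνK]
    exact hball K le_rfl
  refine ⟨s, hs0, hsubK, ?_⟩
  intro x hx
  apply main K le_rfl
  rwa [hνK]
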